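/- If G is the Laplacian of a connected weighted graph and C ⊂ V is a proper nonempty subset of vertices, then the Schur complement Sc(L_G, C) = L_{CC} - L_{CF} L_{FF}^{-1} L_{FC} (with F = V \ C) is itself the Laplacian matrix of a connected weighted graph on vertex set C. -/

import Mathlib

open Matrix BigOperators

/-- Laplacian of a weighted graph given by a symmetric weight function with zero diagonal. -/
def lap {V : Type*} [Fintype V] [DecidableEq V] (w : V → V → ℝ) : Matrix V V ℝ :=
  fun u v => if u = v then ∑ x, w u x else - w u v

namespace SchurAux

/-! ### Generic lemmas about `lap` -/

section Generic

variable {V : Type*} [Fintype V] [DecidableEq V]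

lemma lap_symm (w : V → V → ℝ) (hsym : ∀ u v, w u v = w v u) (a b : V) :
    lap w a b = lap w b a := by
  unfold lap
  rcases eq_or_ne a b with rfl | h
  · rfl
  · simp [h, h.symm, hsym a b]

lemma lap_mulVec (w : V → V → ℝ) (hdiag : ∀ u, w u u = 0) (y : V → ℝ) (u : V) :
    (lap w *ᵥ y) u = ∑ v, w u v * (y u - y v) := by
  have key : ∀ v, lap w u v = (if u = v then (∑ x, w u x) else 0) + (- w u v) := by
    intro v
    unfold lap
    by_cases h : u = v
    · subst h; simp [hdiag]
    · simp [h]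
  have : (lap w *ᵥ y) u = ∑ v, lap w u v * y v := rfl
  rw [this]
  simp only [key, add_mul, ite_mul, zero_mul, neg_mul]
  rw [Finset.sum_add_distrib, Finset.sum_ite_eq]
  simp only [Finset.mem_univ, if_true]
  have h1 : ∑ v, w u v * (y u - y v) = (∑ v, w u v) * y u - ∑ v, w u v * y v := by
    rw [Finset.sum_mul, ← Finset.sum_sub_distrib]
    exact Finset.sum_congr rfl fun v _ => by ring
  rw [h1]
  rw [Finset.sum_neg_distrib]
  ring

lemma lap_quadform (w : V → V → ℝ) (hsym : ∀ u v, w u v = w v u)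
    (hdiag : ∀ u, w u u = 0) (y : V → ℝ) :
    y ⬝ᵥ (lap w *ᵥ y) = (1/2) * ∑ u, ∑ v, w u v * (y u - y v)^2 := by
  have h1 : y ⬝ᵥ (lap w *ᵥ y) = ∑ u, ∑ v, w u v * y u * (y u - y v) := by
    unfold dotProduct
    rw [Finset.sum_congr rfl fun u _ => ?_]
    rw [lap_mulVec w hdiag y u, Finset.mul_sum]
    exact Finset.sum_congr rfl fun v _ => by ring
  have h2 : (∑ u, ∑ v, w u v * y u * (y u - y v))
      = ∑ u, ∑ v, w u v * y v * (y v - y u) := by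
    rw [Finset.sum_comm]
    exact Finset.sum_congr rfl fun u _ => Finset.sum_congr rfl fun v _ => by rw [hsym]
  have h3 : (∑ u, ∑ v, w u v * y u * (y u - y v)) + ∑ u, ∑ v, w u v * y v * (y v - y u)
      = ∑ u, ∑ v, w u v * (y u - y v)^2 := by
    rw [← Finset.sum_add_distrib]
    refine Finset.sum_congr rfl fun u _ => ?_
    rw [← Finset.sum_add_distrib]
    exact Finset.sum_congr rfl fun v _ => by ring
  rw [h1]
  linarith [h2, h3]

lemma const_on_reachable {G : SimpleGraph V} (y : V → ℝ)
    (h : ∀ a b, G.Adj a b → y a = y b) {a b : V} (hr : G.Reachable a b) :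
    y a = y b := by
  obtain ⟨p⟩ := hr
  induction p with
  | nil => rfl
  | cons hadj q ih => exact (h _ _ hadj).trans ih

end Generic

/-! ### Main setup -/

section Main

variable {Fv Cv : Type*} [Fintype Fv] [Fintype Cv] [DecidableEq Fv] [DecidableEq Cv]

/-- The `FF` block of the Laplacian. -/
noncomputable def Amat (w : (Fv ⊕ Cv) → (Fv ⊕ Cv) → ℝ) : Matrix Fv Fv ℝ :=
  (lap w).toBlocks₁₁

/-- A number strictly larger than all row sums of `|Amat|`. -/
noncomputable def alpha (w : (Fv ⊕ Cv) → (Fv ⊕ Cv) → ℝ) : ℝ :=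
  1 + ∑ i, ∑ j, |Amat w i j|

/-- Nonnegative matrix `P = I - A / α`. -/
noncomputable def Pmat (w : (Fv ⊕ Cv) → (Fv ⊕ Cv) → ℝ) : Matrix Fv Fv ℝ :=
  1 - (alpha w)⁻¹ • Amat w

variable (w : (Fv ⊕ Cv) → (Fv ⊕ Cv) → ℝ)

lemma Amat_apply (u v : Fv) : Amat w u v = lap w (Sum.inl u) (Sum.inl v) := rfl

lemma Amat_diag (u : Fv) : Amat w u u = ∑ x, w (Sum.inl u) x := by
  simp [Amat_apply, lap]

lemma Amat_offdiag {u v : Fv} (h : u ≠ v) : Amat w u v = - w (Sum.inl u) (Sum.inl v) := by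
  have : Sum.inl u ≠ (Sum.inl v : Fv ⊕ Cv) := fun h' => h (Sum.inl_injective h')
  simp [Amat_apply, lap, this]

lemma alpha_pos : 0 < alpha w := by
  have : 0 ≤ ∑ i, ∑ j, |Amat w i j| :=
    Finset.sum_nonneg fun i _ => Finset.sum_nonneg fun j _ => abs_nonneg _
  unfold alpha; linarith

lemma abs_Amat_le (i j : Fv) : |Amat w i j| ≤ alpha w - 1 := by
  unfold alpha
  have h1 : |Amat w i j| ≤ ∑ j', |Amat w i j'| :=
    Finset.single_le_sum (f := fun j' => |Amat w i j'|) (fun j' _ => abs_nonneg _)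
      (Finset.mem_univ j)
  have h2 : (∑ j', |Amat w i j'|) ≤ ∑ i', ∑ j', |Amat w i' j'| :=
    Finset.single_le_sum (f := fun i' => ∑ j', |Amat w i' j'|)
      (fun i' _ => Finset.sum_nonneg fun j' _ => abs_nonneg _) (Finset.mem_univ i)
  linarith

lemma Pmat_apply (i j : Fv) :
    Pmat w i j = (if i = j then (1:ℝ) else 0) - (alpha w)⁻¹ * Amat w i j := by
  simp [Pmat, Matrix.sub_apply, Matrix.smul_apply, Matrix.one_apply, smul_eq_mul]

lemma rowsum_abs_Amat_le (i : Fv) : (∑ j, |Amat w i j|) ≤ alpha w - 1 := by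
  unfold alpha
  have h2 : (∑ j', |Amat w i j'|) ≤ ∑ i', ∑ j', |Amat w i' j'| :=
    Finset.single_le_sum (f := fun i' => ∑ j', |Amat w i' j'|)
      (fun i' _ => Finset.sum_nonneg fun j' _ => abs_nonneg _) (Finset.mem_univ i)
  linarith

/-- The weight function of the Schur complement graph. -/
noncomputable def wS (w : (Fv ⊕ Cv) → (Fv ⊕ Cv) → ℝ) : Cv → Cv → ℝ := fun c c' =>
  if c = c' then 0 else
    w (Sum.inr c) (Sum.inr c')
      + ∑ u, ∑ v, w (Sum.inr c) (Sum.inl u) * (Amat w)⁻¹ u v * w (Sum.inl v) (Sum.inr c')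

lemma wS_diag (c : Cv) : wS w c c = 0 := by simp [wS]

variable (hsym : ∀ u v, w u v = w v u) (hdiag : ∀ u, w u u = 0)
    (hnonneg : ∀ u v, 0 ≤ w u v)

section WithHyps

include hsym

lemma Amat_herm : (Amat w).IsHermitian := by
  ext i j
  simp only [conjTranspose_apply, star_trivial]
  rw [Amat_apply, Amat_apply, lap_symm w hsym]

include hdiag hnonneg

lemma Amat_posdef [Nonempty Cv]
    (hconn : (SimpleGraph.fromRel (fun u v => 0 < w u v)).Connected) :
    (Amat w).PosDef := by
  refine posDef_iff_dotProduct_mulVec.mpr ⟨Amat_herm w hsym, fun x hx => ?_⟩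
  have hstar : star x = x := funext fun i => star_trivial _
  rw [hstar]
  set y : (Fv ⊕ Cv) → ℝ := Sum.elim x 0 with hy
  have hqf : x ⬝ᵥ (Amat w *ᵥ x) = y ⬝ᵥ (lap w *ᵥ y) := by
    simp only [dotProduct, mulVec, dotProduct, Fintype.sum_sum_type, hy,
      Sum.elim_inl, Sum.elim_inr, Pi.zero_apply, mul_zero, zero_mul, add_zero,
      Finset.sum_const_zero, Amat_apply]
  rw [hqf, lap_quadform w hsym hdiag y]
  have hterm : ∀ u v, 0 ≤ w u v * (y u - y v)^2 := fun u v =>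
    mul_nonneg (hnonneg u v) (sq_nonneg _)
  have h0 : 0 ≤ ∑ u, ∑ v, w u v * (y u - y v)^2 :=
    Finset.sum_nonneg fun u _ => Finset.sum_nonneg fun v _ => hterm u v
  rcases h0.lt_or_eq with h | h
  · linarith
  · exfalso
    have hz : ∀ u v, 0 < w u v → y u = y v := by
      intro u v hw
      have h1 := (Finset.sum_eq_zero_iff_of_nonneg
        (fun u _ => Finset.sum_nonneg fun v _ => hterm u v)).mp h.symm u (Finset.mem_univ u)
      have h2 := (Finset.sum_eq_zero_iff_of_nonneg (fun v _ => hterm u v)).mp h1 v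
        (Finset.mem_univ v)
      rcases mul_eq_zero.mp h2 with h3 | h3
      · exact absurd h3 hw.ne'
      · exact sub_eq_zero.mp (sq_eq_zero_iff.mp h3)
    have hadj : ∀ a b, (SimpleGraph.fromRel fun u v => 0 < w u v).Adj a b → y a = y b := by
      intro a b hab
      rw [SimpleGraph.fromRel_adj] at hab
      rcases hab.2 with h' | h'
      · exact hz _ _ h'
      · exact (hz _ _ h').symm
    obtain ⟨c₀⟩ := ‹Nonempty Cv›
    have hconst : ∀ a, y a = y (Sum.inr c₀) := fun a =>
      const_on_reachable y hadj (hconn.preconnected a (Sum.inr c₀))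
    apply hx
    funext u
    simpa [hy] using hconst (Sum.inl u)

lemma Pmat_nonneg (i j : Fv) : 0 ≤ Pmat w i j := by
  have hα := alpha_pos w
  rw [Pmat_apply]
  rcases eq_or_ne i j with rfl | h
  · rw [if_pos rfl]
    have h1 : Amat w i i ≤ alpha w := le_trans (le_abs_self _)
      (by linarith [abs_Amat_le w i i])
    have h2 : (alpha w)⁻¹ * Amat w i i ≤ (alpha w)⁻¹ * alpha w :=
      mul_le_mul_of_nonneg_left h1 (inv_nonneg.mpr hα.le)
    rw [inv_mul_cancel₀ hα.ne'] at h2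
    linarith
  · rw [if_neg h, Amat_offdiag w h]
    have := mul_nonneg (inv_nonneg.mpr hα.le) (hnonneg (Sum.inl i) (Sum.inl j))
    linarith

lemma Pmat_herm : (Pmat w).IsHermitian := by
  have hA := Amat_herm w hsym
  ext i j
  have hAij : Amat w j i = Amat w i j := by
    conv_lhs => rw [← hA]
    simp [conjTranspose_apply]
  simp only [conjTranspose_apply, star_trivial, Pmat_apply, hAij]
  rw [show (if j = i then (1:ℝ) else 0) = (if i = j then (1:ℝ) else 0) by
    simp [eq_comm]]

lemma Ppow_nonneg (n : ℕ) (i j : Fv) : 0 ≤ (Pmat w ^ n) i j := by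
  induction n generalizing i j with
  | zero =>
    simp only [pow_zero, Matrix.one_apply]
    split <;> norm_num
  | succ n ih =>
    rw [pow_succ, Matrix.mul_apply]
    exact Finset.sum_nonneg fun k _ => mul_nonneg (ih i k)
      (Pmat_nonneg w hsym hdiag hnonneg k j)

lemma eigen_abs_lt_one [Nonempty Cv]
    (hconn : (SimpleGraph.fromRel (fun u v => 0 < w u v)).Connected) (k : Fv) :
    |(Pmat_herm w hsym hdiag hnonneg).eigenvalues k| < 1 := by
  have hα := alpha_pos w
  set lam := (Pmat_herm w hsym hdiag hnonneg).eigenvalues k with hlam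
  set v : Fv → ℝ := ⇑((Pmat_herm w hsym hdiag hnonneg).eigenvectorBasis k) with hv
  have hPv : Pmat w *ᵥ v = lam • v := (Pmat_herm w hsym hdiag hnonneg).mulVec_eigenvectorBasis k
  have hvne : v ≠ 0 := by
    intro h0
    have hb : (Pmat_herm w hsym hdiag hnonneg).eigenvectorBasis k = 0 := by
      ext i
      exact congrFun h0 i
    exact ((Pmat_herm w hsym hdiag hnonneg).eigenvectorBasis.toBasis.ne_zero k)
      (by rw [OrthonormalBasis.coe_toBasis, hb])
  have hAv : Amat w *ᵥ v = (alpha w * (1 - lam)) • v := by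
    have hP2 : Pmat w *ᵥ v = v - (alpha w)⁻¹ • (Amat w *ᵥ v) := by
      simp [Pmat, Matrix.sub_mulVec, Matrix.smul_mulVec, Matrix.one_mulVec]
    rw [hP2] at hPv
    funext i
    have h := congrFun hPv i
    simp only [Pi.sub_apply, Pi.smul_apply, smul_eq_mul] at h ⊢
    have : (Amat w *ᵥ v) i = alpha w * (v i - lam * v i) := by
      field_simp at h
      linarith
    rw [this]; ring
  have hpd := Amat_posdef w hsym hdiag hnonneg hconn
  have hquad : 0 < v ⬝ᵥ (Amat w *ᵥ v) := by
    have h := hpd.dotProduct_mulVec_pos hvne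
    rwa [show star v = v from funext fun i => star_trivial _] at h
  have hvv : 0 < v ⬝ᵥ v := by
    have h1 : 0 ≤ v ⬝ᵥ v := Finset.sum_nonneg fun i _ => mul_self_nonneg _
    rcases h1.lt_or_eq with h | h
    · exact h
    · exact absurd (dotProduct_self_eq_zero.mp h.symm) hvne
  have hmu_pos : 0 < alpha w * (1 - lam) := by
    have heq : v ⬝ᵥ (Amat w *ᵥ v) = (alpha w * (1 - lam)) * (v ⬝ᵥ v) := by
      rw [hAv]
      simp [dotProduct, Finset.mul_sum]
      exact Finset.sum_congr rfl fun i _ => by ring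
    rw [heq] at hquad
    by_contra hle
    push_neg at hle
    nlinarith
  have hμeig : Module.End.HasEigenvalue (Matrix.toLin' (Amat w)) (alpha w * (1 - lam)) := by
    apply Module.End.hasEigenvalue_of_hasEigenvector (x := v)
    refine ⟨Module.End.mem_eigenspace_iff.mpr ?_, hvne⟩
    rw [Matrix.toLin'_apply, hAv]
  obtain ⟨kk, hball⟩ := eigenvalue_mem_ball hμeig
  rw [Metric.mem_closedBall, Real.dist_eq] at hball
  have hAkk : 0 ≤ Amat w kk kk := by
    rw [Amat_diag]
    exact Finset.sum_nonneg fun x _ => hnonneg _ _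
  have hsum : Amat w kk kk + ∑ j ∈ Finset.univ.erase kk, ‖Amat w kk j‖ ≤ alpha w - 1 := by
    have he : |Amat w kk kk| + ∑ j ∈ Finset.univ.erase kk, |Amat w kk j|
        = ∑ j, |Amat w kk j| :=
      Finset.add_sum_erase Finset.univ (fun j => |Amat w kk j|) (Finset.mem_univ kk)
    have := rowsum_abs_Amat_le w kk
    simp only [Real.norm_eq_abs]
    rw [abs_of_nonneg hAkk] at he
    linarith
  have hμle : alpha w * (1 - lam) ≤ alpha w - 1 := by
    have h1 : alpha w * (1 - lam) - Amat w kk kk ≤ |alpha w * (1 - lam) - Amat w kk kk| :=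
      le_abs_self _
    linarith
  rw [abs_lt]
  constructor
  · nlinarith
  · nlinarith

lemma Ppow_tendsto [Nonempty Cv]
    (hconn : (SimpleGraph.fromRel (fun u v => 0 < w u v)).Connected) (i j : Fv) :
    Filter.Tendsto (fun n => (Pmat w ^ n) i j) Filter.atTop (nhds 0) := by
  have hP : (Pmat w).IsHermitian := Pmat_herm w hsym hdiag hnonneg
  set U : Matrix Fv Fv ℝ := (hP.eigenvectorUnitary : Matrix Fv Fv ℝ) with hU
  set ev : Fv → ℝ := hP.eigenvalues with hev
  have hUU' : star U * U = 1 := mem_unitaryGroup_iff'.mp hP.eigenvectorUnitary.2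
  have hUU : U * star U = 1 := mem_unitaryGroup_iff.mp hP.eigenvectorUnitary.2
  have hevlt : ∀ k, |ev k| < 1 := by
    intro k
    rw [hev]
    exact eigen_abs_lt_one w hsym hdiag hnonneg hconn k
  have hspec : Pmat w = U * Matrix.diagonal ev * star U := by
    have h := hP.spectral_theorem
    rw [hU, hev]
    simpa using h
  have hpow : ∀ n, Pmat w ^ n
      = U * Matrix.diagonal (fun k => ev k ^ n) * star U := by
    intro n
    induction n with
    | zero =>
      simp [hUU]
    | succ n ih =>
      rw [pow_succ, ih]
      nth_rewrite 1 [hspec]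
      calc (U * Matrix.diagonal (fun k => ev k ^ n) * star U)
          * (U * Matrix.diagonal ev * star U)
          = U * Matrix.diagonal (fun k => ev k ^ n)
            * ((star U * U) * (Matrix.diagonal ev * star U)) := by
            simp only [Matrix.mul_assoc]
        _ = U * (Matrix.diagonal (fun k => ev k ^ n)
            * Matrix.diagonal ev) * star U := by
            rw [hUU', Matrix.one_mul]; simp only [Matrix.mul_assoc]
        _ = U * Matrix.diagonal (fun k => ev k ^ (n + 1)) * star U := by
            simp [Matrix.diagonal_mul_diagonal, pow_succ]
  have hentry : ∀ n, (Pmat w ^ n) i j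
      = ∑ k, U i k * ev k ^ n * U j k := by
    intro n
    rw [hpow n, Matrix.mul_apply]
    refine Finset.sum_congr rfl fun k _ => ?_
    rw [Matrix.mul_diagonal]
    simp [Matrix.star_apply]
  simp only [hentry]
  have h0 : ∀ k : Fv, Filter.Tendsto (fun n => U i k * ev k ^ n * U j k)
      Filter.atTop (nhds 0) := by
    intro k
    have h1 := tendsto_pow_atTop_nhds_zero_of_abs_lt_one (hevlt k)
    have h2 := (h1.const_mul (U i k)).mul_const (U j k)
    simpa using h2
  have := tendsto_finset_sum (Finset.univ : Finset Fv) (fun k _ => h0 k)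
  simpa using this

lemma inv_mul_Amat [Nonempty Cv]
    (hconn : (SimpleGraph.fromRel (fun u v => 0 < w u v)).Connected) :
    (Amat w)⁻¹ * Amat w = 1 :=
  Matrix.nonsing_inv_mul _ (isUnit_iff_ne_zero.mpr
    (Amat_posdef w hsym hdiag hnonneg hconn).det_pos.ne')

lemma inv_identity [Nonempty Cv]
    (hconn : (SimpleGraph.fromRel (fun u v => 0 < w u v)).Connected) (n : ℕ) :
    (Amat w)⁻¹ = (alpha w)⁻¹ • (∑ k ∈ Finset.range n, Pmat w ^ k)
      + (Amat w)⁻¹ * Pmat w ^ n := by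
  have hα := alpha_pos w
  have hInv := inv_mul_Amat w hsym hdiag hnonneg hconn
  have hA_eq : Amat w = alpha w • ((1 : Matrix Fv Fv ℝ) - Pmat w) := by
    unfold Pmat
    rw [sub_sub_cancel, smul_smul, mul_inv_cancel₀ hα.ne', one_smul]
  have hAP : Amat w * ((alpha w)⁻¹ • ∑ k ∈ Finset.range n, Pmat w ^ k)
      = 1 - Pmat w ^ n := by
    rw [hA_eq, Matrix.smul_mul, Matrix.mul_smul, smul_smul, mul_inv_cancel₀ hα.ne',
      one_smul]
    exact mul_neg_geom_sum (Pmat w) n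
  calc (Amat w)⁻¹ = (Amat w)⁻¹ * (1 - Pmat w ^ n) + (Amat w)⁻¹ * Pmat w ^ n := by
        rw [Matrix.mul_sub, Matrix.mul_one, sub_add_cancel]
    _ = (Amat w)⁻¹ * (Amat w * ((alpha w)⁻¹ • ∑ k ∈ Finset.range n, Pmat w ^ k))
        + (Amat w)⁻¹ * Pmat w ^ n := by rw [hAP]
    _ = (alpha w)⁻¹ • (∑ k ∈ Finset.range n, Pmat w ^ k)
        + (Amat w)⁻¹ * Pmat w ^ n := by
        rw [← Matrix.mul_assoc, hInv, Matrix.one_mul]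

lemma inv_nonneg' [Nonempty Cv]
    (hconn : (SimpleGraph.fromRel (fun u v => 0 < w u v)).Connected) (i j : Fv) :
    0 ≤ (Amat w)⁻¹ i j := by
  have hα := alpha_pos w
  have htail : Filter.Tendsto (fun n => ((Amat w)⁻¹ * Pmat w ^ n) i j)
      Filter.atTop (nhds 0) := by
    simp only [Matrix.mul_apply]
    have h0 : ∀ k : Fv, Filter.Tendsto (fun n => (Amat w)⁻¹ i k * (Pmat w ^ n) k j)
        Filter.atTop (nhds 0) := by
      intro k
      have := (Ppow_tendsto w hsym hdiag hnonneg hconn k j).const_mul ((Amat w)⁻¹ i k)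
      simpa using this
    have := tendsto_finset_sum (Finset.univ : Finset Fv) (fun k _ => h0 k)
    simpa using this
  have hmain : Filter.Tendsto
      (fun n => ((alpha w)⁻¹ • ∑ k ∈ Finset.range n, Pmat w ^ k) i j)
      Filter.atTop (nhds ((Amat w)⁻¹ i j)) := by
    have heq : ∀ n, ((alpha w)⁻¹ • ∑ k ∈ Finset.range n, Pmat w ^ k) i j
        = (Amat w)⁻¹ i j - ((Amat w)⁻¹ * Pmat w ^ n) i j := by
      intro n
      have h := congrFun (congrFun (inv_identity w hsym hdiag hnonneg hconn n) i) j
      rw [Matrix.add_apply] at h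
      linarith
    simp only [heq]
    simpa using tendsto_const_nhds.sub htail
  refine ge_of_tendsto hmain ?_
  filter_upwards with n
  rw [Matrix.smul_apply, Matrix.sum_apply, smul_eq_mul]
  exact mul_nonneg (inv_nonneg.mpr hα.le)
    (Finset.sum_nonneg fun k _ => Ppow_nonneg w hsym hdiag hnonneg k i j)

lemma inv_pos_of_Ppow [Nonempty Cv]
    (hconn : (SimpleGraph.fromRel (fun u v => 0 < w u v)).Connected) {i j : Fv}
    (h : ∃ m, 0 < (Pmat w ^ m) i j) : 0 < (Amat w)⁻¹ i j := by
  have hα := alpha_pos w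
  obtain ⟨m, hm⟩ := h
  have h := congrFun (congrFun (inv_identity w hsym hdiag hnonneg hconn (m+1)) i) j
  rw [Matrix.add_apply, Matrix.smul_apply, Matrix.sum_apply, smul_eq_mul] at h
  have htail : 0 ≤ ((Amat w)⁻¹ * Pmat w ^ (m+1)) i j := by
    rw [Matrix.mul_apply]
    exact Finset.sum_nonneg fun k _ => mul_nonneg
      (inv_nonneg' w hsym hdiag hnonneg hconn i k)
      (Ppow_nonneg w hsym hdiag hnonneg (m+1) k j)
  have hsum : (Pmat w ^ m) i j ≤ ∑ k ∈ Finset.range (m+1), (Pmat w ^ k) i j :=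
    Finset.single_le_sum (f := fun k => (Pmat w ^ k) i j)
      (fun k _ => Ppow_nonneg w hsym hdiag hnonneg k i j)
      (Finset.mem_range.mpr (Nat.lt_succ_self m))
  have hpos : 0 < (alpha w)⁻¹ * ∑ k ∈ Finset.range (m+1), (Pmat w ^ k) i j :=
    mul_pos (inv_pos.mpr hα) (lt_of_lt_of_le hm hsum)
  linarith [h, hpos, htail]

lemma inv_pos_of_reachable [Nonempty Cv]
    (hconn : (SimpleGraph.fromRel (fun u v => 0 < w u v)).Connected) {i j : Fv}
    (h : (SimpleGraph.fromRel
        (fun u v : Fv => 0 < w (Sum.inl u) (Sum.inl v))).Reachable i j) :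
    0 < (Amat w)⁻¹ i j := by
  apply inv_pos_of_Ppow w hsym hdiag hnonneg hconn
  obtain ⟨p⟩ := h
  clear hconn
  induction p with
  | nil => exact ⟨0, by simp⟩
  | @cons x y z hadj q ih =>
    obtain ⟨m, hm⟩ := ih
    refine ⟨m + 1, ?_⟩
    rw [pow_succ', Matrix.mul_apply]
    have hxy : 0 < Pmat w x y := by
      rw [SimpleGraph.fromRel_adj] at hadj
      have hw : 0 < w (Sum.inl x) (Sum.inl y) := by
        rcases hadj.2 with h' | h'
        · exact h'
        · rw [hsym]; exact h'
      rw [Pmat_apply, if_neg (fun h' => hadj.1 h'), Amat_offdiag w (fun h' => hadj.1 h')]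
      have := mul_pos (inv_pos.mpr (alpha_pos w)) hw
      linarith
    refine Finset.sum_pos' (fun k _ => mul_nonneg (Pmat_nonneg w hsym hdiag hnonneg x k)
      (Ppow_nonneg w hsym hdiag hnonneg m k z)) ⟨y, Finset.mem_univ y, ?_⟩
    exact mul_pos hxy hm

lemma Amat_transpose : (Amat w)ᵀ = Amat w := by
  ext i j
  rw [Matrix.transpose_apply, Amat_apply, Amat_apply, lap_symm w hsym]

lemma inv_symm (u v : Fv) : (Amat w)⁻¹ u v = (Amat w)⁻¹ v u := by
  have h : ((Amat w)⁻¹)ᵀ = (Amat w)⁻¹ := by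
    rw [Matrix.transpose_nonsing_inv, Amat_transpose w hsym hdiag hnonneg]
  conv_lhs => rw [← h]
  rw [Matrix.transpose_apply]

lemma wS_symm (c c' : Cv) : wS w c c' = wS w c' c := by
  unfold wS
  rcases eq_or_ne c c' with rfl | hne
  · rfl
  · rw [if_neg hne, if_neg hne.symm]
    congr 1
    · exact hsym _ _
    · calc ∑ u, ∑ v, w (Sum.inr c) (Sum.inl u) * (Amat w)⁻¹ u v * w (Sum.inl v) (Sum.inr c')
          = ∑ v, ∑ u, w (Sum.inr c) (Sum.inl u) * (Amat w)⁻¹ u v * w (Sum.inl v) (Sum.inr c') :=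
            Finset.sum_comm
        _ = ∑ u, ∑ v, w (Sum.inr c') (Sum.inl u) * (Amat w)⁻¹ u v * w (Sum.inl v) (Sum.inr c) := by
            refine Finset.sum_congr rfl fun u _ => Finset.sum_congr rfl fun v _ => ?_
            rw [inv_symm w hsym hdiag hnonneg v u, hsym (Sum.inr c) (Sum.inl v),
              hsym (Sum.inl u) (Sum.inr c')]
            ring

lemma wS_nonneg [Nonempty Cv]
    (hconn : (SimpleGraph.fromRel (fun u v => 0 < w u v)).Connected) (c c' : Cv) :
    0 ≤ wS w c c' := by
  unfold wS
  split
  · exact le_refl 0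
  · refine add_nonneg (hnonneg _ _) (Finset.sum_nonneg fun u _ =>
      Finset.sum_nonneg fun v _ => ?_)
    exact mul_nonneg (mul_nonneg (hnonneg _ _)
      (inv_nonneg' w hsym hdiag hnonneg hconn u v)) (hnonneg _ _)

lemma rowsum_inv [Nonempty Cv]
    (hconn : (SimpleGraph.fromRel (fun u v => 0 < w u v)).Connected) (u : Fv) :
    ∑ v, (Amat w)⁻¹ u v * (∑ d, w (Sum.inl v) (Sum.inr d)) = 1 := by
  set s : Fv → ℝ := fun v => ∑ d, w (Sum.inl v) (Sum.inr d) with hs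
  have hAs : Amat w *ᵥ (fun _ => (1:ℝ)) = s := by
    funext u'
    have h1 : ∑ v, Amat w u' v = s u' := by
      rw [← Finset.add_sum_erase _ _ (Finset.mem_univ u'), Amat_diag,
        Fintype.sum_sum_type]
      have h2 : ∑ v ∈ Finset.univ.erase u', Amat w u' v
          = - ∑ v ∈ Finset.univ.erase u', w (Sum.inl u') (Sum.inl v) := by
        rw [← Finset.sum_neg_distrib]
        refine Finset.sum_congr rfl fun v hv => ?_
        rw [Amat_offdiag w (Ne.symm (Finset.ne_of_mem_erase hv))]
      have h3 : ∑ v ∈ Finset.univ.erase u', w (Sum.inl u') (Sum.inl v)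
          = ∑ v, w (Sum.inl u') (Sum.inl v) := by
        rw [Finset.sum_erase_eq_sub (Finset.mem_univ u'), hdiag, sub_zero]
      rw [h2, h3, hs]
      ring
    have h4 : (Amat w *ᵥ fun _ => (1:ℝ)) u' = ∑ v, Amat w u' v := by
      simp [Matrix.mulVec, dotProduct]
    rw [h4, h1]
  have h2 : (Amat w)⁻¹ *ᵥ s = fun _ => (1:ℝ) := by
    rw [← hAs, Matrix.mulVec_mulVec, inv_mul_Amat w hsym hdiag hnonneg hconn,
      Matrix.one_mulVec]
  have h3 := congrFun h2 u
  simpa [Matrix.mulVec, dotProduct] using h3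

lemma schur_eq [Nonempty Cv]
    (hconn : (SimpleGraph.fromRel (fun u v => 0 < w u v)).Connected) :
    (lap w).toBlocks₂₂ -
        (lap w).toBlocks₂₁ * ((lap w).toBlocks₁₁)⁻¹ * (lap w).toBlocks₁₂ = lap (wS w) := by
  ext c c'
  rw [Matrix.sub_apply]
  have hprod : ((lap w).toBlocks₂₁ * ((lap w).toBlocks₁₁)⁻¹ * (lap w).toBlocks₁₂) c c'
      = ∑ u, ∑ v, w (Sum.inr c) (Sum.inl u) * (Amat w)⁻¹ u v
          * w (Sum.inl v) (Sum.inr c') := by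
    simp only [Matrix.mul_apply, Finset.sum_mul]
    rw [Finset.sum_comm]
    refine Finset.sum_congr rfl fun u _ => Finset.sum_congr rfl fun v _ => ?_
    have hX : (lap w).toBlocks₂₁ c u = - w (Sum.inr c) (Sum.inl u) := by
      show lap w (Sum.inr c) (Sum.inl u) = _
      unfold lap
      rw [if_neg (by simp)]
    have hZ : (lap w).toBlocks₁₂ v c' = - w (Sum.inl v) (Sum.inr c') := by
      show lap w (Sum.inl v) (Sum.inr c') = _
      unfold lap
      rw [if_neg (by simp)]
    have hY : ((lap w).toBlocks₁₁)⁻¹ u v = (Amat w)⁻¹ u v := rfl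
    rw [hX, hZ, hY]
    ring
  have hD : (lap w).toBlocks₂₂ c c' = lap w (Sum.inr c) (Sum.inr c') := rfl
  rw [hprod, hD]
  rcases eq_or_ne c c' with rfl | hne
  · have hlapd : lap w (Sum.inr c) (Sum.inr c) = ∑ x, w (Sum.inr c) x := by
      unfold lap; rw [if_pos rfl]
    have hlapS : lap (wS w) c c = ∑ d, wS w c d := by
      unfold lap; rw [if_pos rfl]
    rw [hlapd, hlapS]
    set f : Cv → ℝ := fun d => w (Sum.inr c) (Sum.inr d)
      + ∑ u, ∑ v, w (Sum.inr c) (Sum.inl u) * (Amat w)⁻¹ u v * w (Sum.inl v) (Sum.inr d)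
      with hf
    have h1 : ∑ d, wS w c d = ∑ d, f d - f c := by
      rw [← Finset.add_sum_erase _ _ (Finset.mem_univ c), wS_diag, zero_add]
      rw [← Finset.sum_erase_eq_sub (Finset.mem_univ c)]
      refine Finset.sum_congr rfl fun d hd => ?_
      have : c ≠ d := Ne.symm (Finset.ne_of_mem_erase hd)
      simp only [wS, if_neg this, hf]
    have h2 : f c = ∑ u, ∑ v, w (Sum.inr c) (Sum.inl u) * (Amat w)⁻¹ u v
        * w (Sum.inl v) (Sum.inr c) := by
      rw [hf]; simp [hdiag]
    have hkey : ∑ d, ∑ u, ∑ v, w (Sum.inr c) (Sum.inl u) * (Amat w)⁻¹ u v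
        * w (Sum.inl v) (Sum.inr d) = ∑ u, w (Sum.inr c) (Sum.inl u) := by
      rw [Finset.sum_comm]
      refine Finset.sum_congr rfl fun u _ => ?_
      rw [Finset.sum_comm]
      have hstep : ∀ v, ∑ d, w (Sum.inr c) (Sum.inl u) * (Amat w)⁻¹ u v
          * w (Sum.inl v) (Sum.inr d)
          = w (Sum.inr c) (Sum.inl u)
            * ((Amat w)⁻¹ u v * ∑ d, w (Sum.inl v) (Sum.inr d)) := by
        intro v
        rw [Finset.mul_sum, Finset.mul_sum]
        exact Finset.sum_congr rfl fun d _ => by ring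
      simp only [hstep]
      rw [← Finset.mul_sum, rowsum_inv w hsym hdiag hnonneg hconn u, mul_one]
    have hsplit : ∑ x, w (Sum.inr c) x
        = (∑ u, w (Sum.inr c) (Sum.inl u)) + ∑ d, w (Sum.inr c) (Sum.inr d) :=
      Fintype.sum_sum_type _
    have h3 : ∑ d, f d = (∑ d, w (Sum.inr c) (Sum.inr d))
        + ∑ d, ∑ u, ∑ v, w (Sum.inr c) (Sum.inl u) * (Amat w)⁻¹ u v
          * w (Sum.inl v) (Sum.inr d) := by
      rw [hf, Finset.sum_add_distrib]
    rw [h1, h2, h3, hkey, hsplit]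
    ring
  · have h1 : lap w (Sum.inr c) (Sum.inr c') = - w (Sum.inr c) (Sum.inr c') := by
      unfold lap; rw [if_neg (by simp [hne])]
    have h2 : lap (wS w) c c' = - wS w c c' := by
      unfold lap; rw [if_neg hne]
    rw [h1, h2]
    simp only [wS, if_neg hne]
    ring

lemma wS_conn [Nonempty Cv]
    (hconn : (SimpleGraph.fromRel (fun u v => 0 < w u v)).Connected) :
    (SimpleGraph.fromRel (fun a b : Cv => 0 < wS w a b)).Connected := by
  set G := SimpleGraph.fromRel (fun a b : Fv ⊕ Cv => 0 < w a b) with hG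
  set G' := SimpleGraph.fromRel (fun a b : Cv => 0 < wS w a b) with hG'
  set FG := SimpleGraph.fromRel (fun a b : Fv => 0 < w (Sum.inl a) (Sum.inl b)) with hFG
  have hwadj : ∀ a b, G.Adj a b → a ≠ b ∧ 0 < w a b := by
    intro a b h
    rw [hG, SimpleGraph.fromRel_adj] at h
    refine ⟨h.1, ?_⟩
    rcases h.2 with h' | h'
    · exact h'
    · rw [hsym]; exact h'
  have hterm_nonneg : ∀ c d : Cv, ∀ u v : Fv,
      0 ≤ w (Sum.inr c) (Sum.inl u) * (Amat w)⁻¹ u v * w (Sum.inl v) (Sum.inr d) :=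
    fun c d u v => mul_nonneg (mul_nonneg (hnonneg _ _)
      (inv_nonneg' w hsym hdiag hnonneg hconn u v)) (hnonneg _ _)
  have hadj_direct : ∀ c d : Cv, c ≠ d → 0 < w (Sum.inr c) (Sum.inr d) → G'.Adj c d := by
    intro c d hne hw
    rw [hG', SimpleGraph.fromRel_adj]
    refine ⟨hne, Or.inl ?_⟩
    have hSig : 0 ≤ ∑ u, ∑ v, w (Sum.inr c) (Sum.inl u) * (Amat w)⁻¹ u v
        * w (Sum.inl v) (Sum.inr d) :=
      Finset.sum_nonneg fun u _ => Finset.sum_nonneg fun v _ => hterm_nonneg c d u v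
    simp only [wS, if_neg hne]
    linarith
  have hadj_via : ∀ c d : Cv, c ≠ d → ∀ u v : Fv, 0 < w (Sum.inr c) (Sum.inl u) →
      FG.Reachable u v → 0 < w (Sum.inl v) (Sum.inr d) → G'.Adj c d := by
    intro c d hne u v h1 h2 h3
    rw [hG', SimpleGraph.fromRel_adj]
    refine ⟨hne, Or.inl ?_⟩
    have hterm : 0 < w (Sum.inr c) (Sum.inl u) * (Amat w)⁻¹ u v
        * w (Sum.inl v) (Sum.inr d) :=
      mul_pos (mul_pos h1 (inv_pos_of_reachable w hsym hdiag hnonneg hconn h2)) h3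
    have hs1 : w (Sum.inr c) (Sum.inl u) * (Amat w)⁻¹ u v * w (Sum.inl v) (Sum.inr d)
        ≤ ∑ v', w (Sum.inr c) (Sum.inl u) * (Amat w)⁻¹ u v' * w (Sum.inl v') (Sum.inr d) :=
      Finset.single_le_sum (f := fun v' => w (Sum.inr c) (Sum.inl u) * (Amat w)⁻¹ u v'
        * w (Sum.inl v') (Sum.inr d)) (fun v' _ => hterm_nonneg c d u v')
        (Finset.mem_univ v)
    have hs2 : (∑ v', w (Sum.inr c) (Sum.inl u) * (Amat w)⁻¹ u v' * w (Sum.inl v') (Sum.inr d))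
        ≤ ∑ u', ∑ v', w (Sum.inr c) (Sum.inl u') * (Amat w)⁻¹ u' v'
          * w (Sum.inl v') (Sum.inr d) :=
      Finset.single_le_sum (f := fun u' => ∑ v', w (Sum.inr c) (Sum.inl u') * (Amat w)⁻¹ u' v'
        * w (Sum.inl v') (Sum.inr d))
        (fun u' _ => Finset.sum_nonneg fun v' _ => hterm_nonneg c d u' v')
        (Finset.mem_univ u)
    have h0 : 0 ≤ w (Sum.inr c) (Sum.inr d) := hnonneg _ _
    simp only [wS, if_neg hne]
    linarith
  have key : ∀ (x y : Fv ⊕ Cv), G.Walk x y → ∀ c' : Cv, y = Sum.inr c' →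
      (∀ d, x = Sum.inr d → G'.Reachable d c') ∧
      (∀ u, x = Sum.inl u → ∃ d v, G'.Reachable d c' ∧ FG.Reachable u v ∧
        0 < w (Sum.inl v) (Sum.inr d)) := by
    intro x y p
    induction p with
    | nil =>
      intro c' hc'
      subst hc'
      constructor
      · intro d hd
        injection hd with h
        subst h
        exact SimpleGraph.Reachable.refl _
      · intro u hu
        simp at hu
    | @cons a b z hab q ih =>
      intro c' hc'
      have ihs := ih c' hc'
      obtain ⟨hane, hwab⟩ := hwadj a b hab
      constructor
      · intro c hc
        subst hc
        cases b with
        | inl v =>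
          obtain ⟨d, v', hd, hreach, hw'⟩ := ihs.2 v rfl
          rcases eq_or_ne c d with rfl | hne
          · exact hd
          · exact ((hadj_via c d hne v v' hwab hreach hw').reachable).trans hd
        | inr d =>
          have hd := ihs.1 d rfl
          rcases eq_or_ne c d with rfl | hne
          · exact hd
          · exact ((hadj_direct c d hne hwab).reachable).trans hd
      · intro u hu
        subst hu
        cases b with
        | inl v =>
          obtain ⟨d, v', hd, hreach, hw'⟩ := ihs.2 v rfl
          refine ⟨d, v', hd, ?_, hw'⟩
          have hadjF : FG.Adj u v := by
            rw [hFG, SimpleGraph.fromRel_adj]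
            exact ⟨fun h => hane (by rw [h]), Or.inl hwab⟩
          exact hadjF.reachable.trans hreach
        | inr d =>
          exact ⟨d, u, ihs.1 d rfl, SimpleGraph.Reachable.refl _, hwab⟩
  rw [SimpleGraph.connected_iff]
  refine ⟨?_, inferInstance⟩
  intro c c'
  obtain ⟨p⟩ := hconn.preconnected (Sum.inr c) (Sum.inr c')
  exact (key (Sum.inr c) (Sum.inr c') p c' rfl).1 c rfl

end WithHyps

end Main

end SchurAux

theorem stmt6 {Fv Cv : Type*} [Fintype Fv] [Fintype Cv] [DecidableEq Fv] [DecidableEq Cv]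
    [Nonempty Fv] [Nonempty Cv]
    (w : (Fv ⊕ Cv) → (Fv ⊕ Cv) → ℝ)
    (hsym : ∀ u v, w u v = w v u) (hdiag : ∀ u, w u u = 0)
    (hnonneg : ∀ u v, 0 ≤ w u v)
    (hconn : (SimpleGraph.fromRel (fun u v => 0 < w u v)).Connected) :
    ∃ w' : Cv → Cv → ℝ,
      (∀ u v, w' u v = w' v u) ∧ (∀ u v, 0 ≤ w' u v) ∧ (∀ u, w' u u = 0) ∧
      (lap w).toBlocks₂₂ -
          (lap w).toBlocks₂₁ * ((lap w).toBlocks₁₁)⁻¹ * (lap w).toBlocks₁₂ = lap w' ∧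
      (SimpleGraph.fromRel (fun u v => 0 < w' u v)).Connected := by
  exact ⟨SchurAux.wS w, SchurAux.wS_symm w hsym hdiag hnonneg,
    SchurAux.wS_nonneg w hsym hdiag hnonneg hconn, SchurAux.wS_diag w,
    SchurAux.schur_eq w hsym hdiag hnonneg hconn,
    SchurAux.wS_conn w hsym hdiag hnonneg hconn⟩
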